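/- Let A_1, …, A_M be D×D Hermitian complex matrices, let ψ₀ ∈ ℂ^D be a unit vector, define U(θ) = exp(iθ_M A_M) ⋯ exp(iθ_1 A_1), ψ(θ) = U(θ)ψ₀, and ρ_θ = ψ(θ)ψ(θ)† (the rank-one density matrix). Let K be a D×D matrix, F = K†K, and suppose p(θ) = Tr(F ρ_θ) > 0 on a neighborhood of θ; define ψ^{ps}(θ) = K ψ(θ)/√(p(θ)). Then the pure-state QFIM of ψ^{ps} satisfies 𝓘_{ij}(θ | ψ^{ps}) = 4 Re[ Tr(F Ã_j ρ_θ Ã_i)/p(θ) − Tr(F ρ_θ Ã_i) Tr(F Ã_j ρ_θ)/p(θ)² ], where Ã_j = Ã_j(θ) is the conjugated generator [exp(iθ_M A_M) ⋯ exp(iθ_{j+1} A_{j+1})] A_j [exp(iθ_{j+1} A_{j+1}) ⋯ exp(iθ_M A_M)]† (with Ã_M = A_M). -/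

import Mathlib

noncomputable section

open Matrix

/-- Standard Hermitian inner product on `ℂ^D`, conjugate-linear in the first argument. -/
def dotc {D : ℕ} (x y : Fin D → ℂ) : ℂ := ∑ d, starRingEnd ℂ (x d) * y d

/-- Partial derivative of a parametrized family with respect to the `i`-th parameter. -/
def pder {M D : ℕ} (i : Fin M) (φ : (Fin M → ℝ) → (Fin D → ℂ)) (θ : Fin M → ℝ) :
    Fin D → ℂ :=
  fderiv ℝ φ θ (Pi.single i 1)

/-- Pure-state quantum Fisher information matrix entry
`𝓘_{ij}(θ|φ) = 4 Re[⟨∂_iφ,∂_jφ⟩ − ⟨∂_iφ,φ⟩⟨φ,∂_jφ⟩]`. -/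
def qfim {M D : ℕ} (φ : (Fin M → ℝ) → (Fin D → ℂ)) (θ : Fin M → ℝ) (i j : Fin M) : ℝ :=
  4 * (dotc (pder i φ θ) (pder j φ θ) -
        dotc (pder i φ θ) (φ θ) * dotc (φ θ) (pder j φ θ)).re

/-- `Ufam A θ = exp(iθ_M A_M) ⋯ exp(iθ_1 A_1)`. -/
def Ufam {M D : ℕ} (A : Fin M → Matrix (Fin D) (Fin D) ℂ) (θ : Fin M → ℝ) :
    Matrix (Fin D) (Fin D) ℂ :=
  ((List.ofFn fun m : Fin M =>
      NormedSpace.exp (((θ m : ℂ) * Complex.I) • A m)).reverse).prod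

/-- The product of the exponential factors with index strictly greater than `j`. -/
def Vfam {M D : ℕ} (A : Fin M → Matrix (Fin D) (Fin D) ℂ) (θ : Fin M → ℝ) (j : Fin M) :
    Matrix (Fin D) (Fin D) ℂ :=
  (((List.ofFn fun m : Fin M =>
      NormedSpace.exp (((θ m : ℂ) * Complex.I) • A m)).reverse).take (M - 1 - (j : ℕ))).prod

/-- The conjugated generator `Ã_j(θ)` (so `Ã_M = A_M` for the last index). -/
def Atil {M D : ℕ} (A : Fin M → Matrix (Fin D) (Fin D) ℂ) (θ : Fin M → ℝ) (j : Fin M) :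
    Matrix (Fin D) (Fin D) ℂ :=
  Vfam A θ j * A j * (Vfam A θ j)ᴴ

/-! ### Auxiliary lemmas -/

section DotcLemmas

variable {D : ℕ}

lemma dotc_add_left (x y z : Fin D → ℂ) : dotc (x + y) z = dotc x z + dotc y z := by
  simp [dotc, add_mul, Finset.sum_add_distrib]

lemma dotc_add_right (x y z : Fin D → ℂ) : dotc x (y + z) = dotc x y + dotc x z := by
  simp [dotc, mul_add, Finset.sum_add_distrib]

lemma dotc_smul_left (a : ℂ) (x y : Fin D → ℂ) :
    dotc (a • x) y = starRingEnd ℂ a * dotc x y := by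
  simp [dotc, Finset.mul_sum, mul_assoc]

lemma dotc_smul_right (a : ℂ) (x y : Fin D → ℂ) : dotc x (a • y) = a * dotc x y := by
  simp [dotc, Finset.mul_sum]; ring_nf; simp [mul_comm, mul_left_comm]

lemma dotc_rsmul_left (r : ℝ) (x y : Fin D → ℂ) : dotc (r • x) y = (r : ℂ) * dotc x y := by
  have : (r : ℂ) • x = r • x := by ext d; simp [Complex.real_smul]
  rw [← this, dotc_smul_left]; simp

lemma dotc_rsmul_right (r : ℝ) (x y : Fin D → ℂ) : dotc x (r • y) = (r : ℂ) * dotc x y := by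
  have : (r : ℂ) • y = r • y := by ext d; simp [Complex.real_smul]
  rw [← this, dotc_smul_right]

lemma dotc_mulVec_left (N : Matrix (Fin D) (Fin D) ℂ) (x y : Fin D → ℂ) :
    dotc (N.mulVec x) y = dotc x (Nᴴ.mulVec y) := by
  simp only [dotc, Matrix.mulVec, dotProduct, Matrix.conjTranspose_apply, map_sum,
    _root_.map_mul, Finset.sum_mul, Finset.mul_sum]
  rw [Finset.sum_comm]
  refine Finset.sum_congr rfl fun e _ => Finset.sum_congr rfl fun d _ => ?_
  simp [RCLike.star_def]; ring

lemma trace_mul_vecMulVec (P : Matrix (Fin D) (Fin D) ℂ) (a : Fin D → ℂ) :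
    (P * vecMulVec a (star a)).trace = dotc a (P.mulVec a) := by
  simp only [Matrix.trace, Matrix.diag, Matrix.mul_apply, vecMulVec_apply, dotc, Matrix.mulVec,
    dotProduct, Pi.star_apply, RCLike.star_def, Finset.mul_sum]
  refine Finset.sum_congr rfl fun e _ => Finset.sum_congr rfl fun d _ => ?_
  ring

lemma dotc_self_real (x : Fin D → ℂ) : dotc x x = ((∑ d, Complex.normSq (x d) : ℝ) : ℂ) := by
  simp [dotc, Complex.normSq_eq_conj_mul_self]

end DotcLemmas

section FactorLemmas

variable {M D : ℕ}

/-- The individual exponential factor of `Ufam`. -/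
def gfac (A : Fin M → Matrix (Fin D) (Fin D) ℂ) (θ : Fin M → ℝ) (m : Fin M) :
    Matrix (Fin D) (Fin D) ℂ :=
  NormedSpace.exp (((θ m : ℂ) * Complex.I) • A m)

/-- Product of the factors with index strictly less than `j`. -/
def Wfam (A : Fin M → Matrix (Fin D) (Fin D) ℂ) (θ : Fin M → ℝ) (j : Fin M) :
    Matrix (Fin D) (Fin D) ℂ :=
  (((List.ofFn (gfac A θ)).reverse).drop (M - (j : ℕ))).prod

lemma Ufam_eq (A : Fin M → Matrix (Fin D) (Fin D) ℂ) (θ : Fin M → ℝ) :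
    Ufam A θ = ((List.ofFn (gfac A θ)).reverse).prod := rfl

lemma Vfam_eq (A : Fin M → Matrix (Fin D) (Fin D) ℂ) (θ : Fin M → ℝ) (j : Fin M) :
    Vfam A θ j = (((List.ofFn (gfac A θ)).reverse).take (M - 1 - (j : ℕ))).prod := rfl

lemma gfac_congr {A : Fin M → Matrix (Fin D) (Fin D) ℂ} {θ₁ θ₂ : Fin M → ℝ} {m : Fin M}
    (h : θ₁ m = θ₂ m) : gfac A θ₁ m = gfac A θ₂ m := by simp [gfac, h]

lemma Ufam_split (A : Fin M → Matrix (Fin D) (Fin D) ℂ) (θ : Fin M → ℝ) (i : Fin M) :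
    Ufam A θ = Vfam A θ i * (gfac A θ i * Wfam A θ i) := by
  have hiM : (i : ℕ) < M := i.2
  have hk : M - 1 - (i : ℕ) < ((List.ofFn (gfac A θ)).reverse).length := by simp; omega
  have hget : ((List.ofFn (gfac A θ)).reverse)[M - 1 - (i : ℕ)]'hk = gfac A θ i := by
    rw [List.getElem_reverse, List.getElem_ofFn]
    refine congrArg (gfac A θ) (Fin.ext ?_)
    simp only [List.length_ofFn]
    omega
  have hdrop : ((List.ofFn (gfac A θ)).reverse).drop (M - 1 - (i : ℕ)) =
      gfac A θ i :: ((List.ofFn (gfac A θ)).reverse).drop (M - (i : ℕ)) := by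
    rw [List.drop_eq_getElem_cons hk, hget]
    congr 2
    omega
  calc Ufam A θ
      = ((((List.ofFn (gfac A θ)).reverse).take (M - 1 - (i : ℕ))) ++
          (((List.ofFn (gfac A θ)).reverse).drop (M - 1 - (i : ℕ)))).prod := by
        rw [Ufam_eq, List.take_append_drop]
    _ = Vfam A θ i * (gfac A θ i * Wfam A θ i) := by
        rw [List.prod_append, hdrop, List.prod_cons, Vfam_eq, Wfam]

lemma Vfam_congr (A : Fin M → Matrix (Fin D) (Fin D) ℂ) (θ₁ θ₂ : Fin M → ℝ) (i : Fin M)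
    (h : ∀ m : Fin M, m ≠ i → θ₁ m = θ₂ m) : Vfam A θ₁ i = Vfam A θ₂ i := by
  rw [Vfam_eq, Vfam_eq]
  congr 1
  apply List.ext_getElem
  · simp
  · intro n h1 h2
    have hn : n < M - 1 - (i : ℕ) ∧ n < M := by simp at h1; omega
    simp only [List.getElem_take, List.getElem_reverse, List.getElem_ofFn, List.length_ofFn]
    apply gfac_congr
    apply h
    intro hc
    have := congrArg Fin.val hc
    simp at this
    omega

lemma Wfam_congr (A : Fin M → Matrix (Fin D) (Fin D) ℂ) (θ₁ θ₂ : Fin M → ℝ) (i : Fin M)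
    (h : ∀ m : Fin M, m ≠ i → θ₁ m = θ₂ m) : Wfam A θ₁ i = Wfam A θ₂ i := by
  have hiM : (i : ℕ) < M := i.2
  unfold Wfam
  congr 1
  apply List.ext_getElem
  · simp
  · intro n h1 h2
    have hn : n < (i : ℕ) := by simp at h1; omega
    simp only [List.getElem_drop, List.getElem_reverse, List.getElem_ofFn, List.length_ofFn]
    apply gfac_congr
    apply h
    intro hc
    have := congrArg Fin.val hc
    simp at this
    omega

lemma prodH_prod (l : List (Matrix (Fin D) (Fin D) ℂ)) (h : ∀ x ∈ l, xᴴ * x = 1) :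
    l.prodᴴ * l.prod = 1 := by
  induction l with
  | nil => simp
  | cons a l ih =>
    simp only [List.prod_cons, Matrix.conjTranspose_mul]
    have ha := h a (List.mem_cons_self)
    have hl := ih (fun x hx => h x (List.mem_cons_of_mem a hx))
    calc l.prodᴴ * aᴴ * (a * l.prod) = l.prodᴴ * (aᴴ * a * l.prod) := by
          simp [Matrix.mul_assoc]
      _ = 1 := by rw [ha, Matrix.one_mul, hl]

lemma exp_fac_unitary (B : Matrix (Fin D) (Fin D) ℂ) (hB : Bᴴ = B) (r : ℝ) :
    (NormedSpace.exp (((r : ℂ) * Complex.I) • B))ᴴ *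
      NormedSpace.exp (((r : ℂ) * Complex.I) • B) = 1 := by
  have h1 : (NormedSpace.exp (((r : ℂ) * Complex.I) • B))ᴴ =
      NormedSpace.exp (-(((r : ℂ) * Complex.I) • B)) := by
    rw [← Matrix.exp_conjTranspose]
    congr 1
    rw [Matrix.conjTranspose_smul, hB, ← neg_smul]
    congr 1
    simp [Complex.conj_ofReal]
  rw [h1, ← Matrix.exp_add_of_commute (-(((r : ℂ) * Complex.I) • B)) (((r : ℂ) * Complex.I) • B) (Commute.neg_left (Commute.refl _))]
  simp [NormedSpace.exp_zero]

lemma gfac_unitary (A : Fin M → Matrix (Fin D) (Fin D) ℂ) (hA : ∀ m, (A m)ᴴ = A m)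
    (θ : Fin M → ℝ) (m : Fin M) : (gfac A θ m)ᴴ * gfac A θ m = 1 :=
  exp_fac_unitary (A m) (hA m) (θ m)

lemma Vfam_unitary (A : Fin M → Matrix (Fin D) (Fin D) ℂ) (hA : ∀ m, (A m)ᴴ = A m)
    (θ : Fin M → ℝ) (j : Fin M) : (Vfam A θ j)ᴴ * Vfam A θ j = 1 := by
  rw [Vfam_eq]
  apply prodH_prod
  intro x hx
  have hx' : x ∈ List.ofFn (gfac A θ) := List.mem_reverse.mp (List.mem_of_mem_take hx)
  obtain ⟨m, hm⟩ := List.mem_ofFn.mp hx'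
  rw [← hm]
  exact gfac_unitary A hA θ m

lemma Atil_herm (A : Fin M → Matrix (Fin D) (Fin D) ℂ) (hA : ∀ m, (A m)ᴴ = A m)
    (θ : Fin M → ℝ) (j : Fin M) : (Atil A θ j)ᴴ = Atil A θ j := by
  simp [Atil, Matrix.conjTranspose_mul, hA, Matrix.mul_assoc]

end FactorLemmas

section Calculus

attribute [local instance] Matrix.linftyOpNormedAddCommGroup Matrix.linftyOpNormedSpace
  Matrix.linftyOpNormedRing Matrix.linftyOpNormedAlgebra

variable {M D : ℕ}

/-- `mulVec` by a fixed vector, as a continuous `ℝ`-linear map on matrices. -/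
def mulVecCLM (ψ₀ : Fin D → ℂ) : Matrix (Fin D) (Fin D) ℂ →L[ℝ] (Fin D → ℂ) :=
  LinearMap.toContinuousLinearMap
    { toFun := fun N => N.mulVec ψ₀
      map_add' := fun X Y => Matrix.add_mulVec X Y ψ₀
      map_smul' := fun r N => Matrix.smul_mulVec r N ψ₀ }

@[simp] lemma mulVecCLM_apply (ψ₀ : Fin D → ℂ) (N : Matrix (Fin D) (Fin D) ℂ) :
    mulVecCLM ψ₀ N = N.mulVec ψ₀ := rfl

/-- `mulVec` as a continuous `ℝ`-linear map on vectors. -/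
def KmulCLM (K : Matrix (Fin D) (Fin D) ℂ) : (Fin D → ℂ) →L[ℝ] (Fin D → ℂ) :=
  LinearMap.toContinuousLinearMap ((Matrix.mulVecLin K).restrictScalars ℝ)

@[simp] lemma KmulCLM_apply (K : Matrix (Fin D) (Fin D) ℂ) (x : Fin D → ℂ) :
    KmulCLM K x = K.mulVec x := rfl

lemma hasDerivAt_exp_fac (B : Matrix (Fin D) (Fin D) ℂ) (s : ℝ) :
    HasDerivAt (fun t : ℝ => NormedSpace.exp (((t : ℂ) * Complex.I) • B))
      ((Complex.I • B) * NormedSpace.exp (((s : ℂ) * Complex.I) • B)) s := by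
  have hsm : ∀ t : ℝ, ((t : ℂ) * Complex.I) • B = t • (Complex.I • B) := by
    intro t
    rw [← smul_assoc, Complex.real_smul]
  have h := hasDerivAt_exp_smul_const' (𝕂 := ℝ) (Complex.I • B) s
  simp only [hsm]
  exact h

lemma diffAt_gfac (A : Fin M → Matrix (Fin D) (Fin D) ℂ) (m : Fin M) (θ : Fin M → ℝ) :
    DifferentiableAt ℝ (fun θ' => gfac A θ' m) θ := by
  have h1 : DifferentiableAt ℝ
      (fun t : ℝ => NormedSpace.exp (((t : ℂ) * Complex.I) • A m)) (θ m) :=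
    (hasDerivAt_exp_fac (A m) (θ m)).differentiableAt
  have h2 : DifferentiableAt ℝ (fun θ' : Fin M → ℝ => θ' m) θ :=
    (ContinuousLinearMap.proj (R := ℝ) (φ := fun _ : Fin M => ℝ) m).differentiableAt
  exact h1.comp (f := fun θ' : Fin M → ℝ => θ' m) θ h2

lemma diffAt_list_prod {ι : Type*} (l : List ι)
    (f : ι → (Fin M → ℝ) → Matrix (Fin D) (Fin D) ℂ) (θ : Fin M → ℝ)
    (h : ∀ i ∈ l, DifferentiableAt ℝ (f i) θ) :
    DifferentiableAt ℝ (fun θ' => (l.map (fun i => f i θ')).prod) θ := by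
  induction l with
  | nil => simpa using differentiableAt_const (1 : Matrix (Fin D) (Fin D) ℂ)
  | cons a l ih =>
    simp only [List.map_cons, List.prod_cons]
    exact (h a (List.mem_cons_self)).mul (ih (fun i hi => h i (List.mem_cons_of_mem a hi)))

lemma diffAt_Ufam (A : Fin M → Matrix (Fin D) (Fin D) ℂ) (θ : Fin M → ℝ) :
    DifferentiableAt ℝ (Ufam A) θ := by
  have heq : Ufam A = fun θ' =>
      (((List.finRange M).reverse).map (fun m => gfac A θ' m)).prod := by
    funext θ'
    rw [Ufam_eq, List.ofFn_eq_map, ← List.map_reverse]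
  rw [heq]
  exact diffAt_list_prod _ _ _ (fun m _ => diffAt_gfac A m θ)

lemma diffAt_psi (A : Fin M → Matrix (Fin D) (Fin D) ℂ) (ψ₀ : Fin D → ℂ) (θ : Fin M → ℝ) :
    DifferentiableAt ℝ (fun θ' => (Ufam A θ').mulVec ψ₀) θ :=
  ((mulVecCLM ψ₀).differentiableAt).comp θ (diffAt_Ufam A θ)

lemma hasDerivAt_Ufam_line (A : Fin M → Matrix (Fin D) (Fin D) ℂ) (θ : Fin M → ℝ) (i : Fin M) :
    HasDerivAt (fun t : ℝ => Ufam A (θ + t • (Pi.single i 1 : Fin M → ℝ)))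
      (Vfam A θ i * ((Complex.I • A i) * gfac A θ i) * Wfam A θ i) 0 := by
  have key : ∀ t : ℝ, Ufam A (θ + t • (Pi.single i 1 : Fin M → ℝ))
      = Vfam A θ i * (NormedSpace.exp ((((θ i + t : ℝ) : ℂ) * Complex.I) • A i) *
          Wfam A θ i) := by
    intro t
    rw [Ufam_split A (θ + t • (Pi.single i 1 : Fin M → ℝ)) i,
      Vfam_congr A _ θ i (fun m hm => by simp [Pi.single_eq_of_ne hm]),
      Wfam_congr A _ θ i (fun m hm => by simp [Pi.single_eq_of_ne hm])]
    congr 2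
    simp only [gfac, Pi.add_apply, Pi.smul_apply, Pi.single_eq_same, smul_eq_mul, mul_one]
  have hE : HasDerivAt (fun t : ℝ =>
      NormedSpace.exp ((((θ i + t : ℝ) : ℂ) * Complex.I) • A i))
      ((Complex.I • A i) * gfac A θ i) 0 := by
    have h0 : HasDerivAt (fun t : ℝ => θ i + t) 1 0 := (hasDerivAt_id 0).const_add (θ i)
    have h1 := (hasDerivAt_exp_fac (A i) (θ i + 0)).scomp (0 : ℝ) h0
    refine h1.congr_deriv ?_
    simp [gfac]
  have h2 := (hE.mul_const (Wfam A θ i)).const_mul (Vfam A θ i)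
  have h3 : (fun t : ℝ => Vfam A θ i *
      (NormedSpace.exp ((((θ i + t : ℝ) : ℂ) * Complex.I) • A i) * Wfam A θ i)) =
      fun t : ℝ => Ufam A (θ + t • (Pi.single i 1 : Fin M → ℝ)) := by
    funext t; rw [key t]
  rw [← h3]
  refine h2.congr_deriv (Eq.symm ?_)
  rw [Matrix.mul_assoc]

lemma fderiv_psi (A : Fin M → Matrix (Fin D) (Fin D) ℂ) (hA : ∀ m, (A m)ᴴ = A m)
    (ψ₀ : Fin D → ℂ) (θ : Fin M → ℝ) (i : Fin M) :
    fderiv ℝ (fun θ' => (Ufam A θ').mulVec ψ₀) θ (Pi.single i 1)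
      = Complex.I • (Atil A θ i).mulVec ((Ufam A θ).mulVec ψ₀) := by
  have hψd := diffAt_psi A ψ₀ θ
  have hγ : HasDerivAt (fun t : ℝ => θ + t • (Pi.single i 1 : Fin M → ℝ))
      (Pi.single i 1) 0 := by
    simpa using ((hasDerivAt_id (0 : ℝ)).smul_const (Pi.single i 1 : Fin M → ℝ)).const_add θ
  have h0 : θ + (0 : ℝ) • (Pi.single i 1 : Fin M → ℝ) = θ := by simp
  have hF := hψd.hasFDerivAt
  rw [← h0] at hF
  have hline1 : HasDerivAt (fun t : ℝ => (Ufam A (θ + t • (Pi.single i 1 : Fin M → ℝ))).mulVec ψ₀)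
      (fderiv ℝ (fun θ' => (Ufam A θ').mulVec ψ₀) θ (Pi.single i 1)) 0 := by
    have := hF.comp_hasDerivAt 0 hγ
    rw [h0] at this
    exact this
  have hline2 : HasDerivAt (fun t : ℝ => (Ufam A (θ + t • (Pi.single i 1 : Fin M → ℝ))).mulVec ψ₀)
      (Complex.I • (Atil A θ i).mulVec ((Ufam A θ).mulVec ψ₀)) 0 := by
    have hU := hasDerivAt_Ufam_line A θ i
    have h2 := (mulVecCLM ψ₀).hasFDerivAt.comp_hasDerivAt 0 hU
    have hmat : Vfam A θ i * ((Complex.I • A i) * gfac A θ i) * Wfam A θ i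
        = Complex.I • (Atil A θ i * Ufam A θ) := by
      rw [Ufam_split A θ i, Atil]
      have hu := Vfam_unitary A hA θ i
      calc Vfam A θ i * ((Complex.I • A i) * gfac A θ i) * Wfam A θ i
          = Complex.I • (Vfam A θ i * A i * (gfac A θ i * Wfam A θ i)) := by
            simp only [Matrix.mul_smul, Matrix.smul_mul, Matrix.mul_assoc]
        _ = Complex.I • (Vfam A θ i * A i * ((Vfam A θ i)ᴴ * Vfam A θ i) *
              (gfac A θ i * Wfam A θ i)) := by rw [hu]; simp [Matrix.mul_assoc]
        _ = Complex.I • (Vfam A θ i * A i * (Vfam A θ i)ᴴ *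
              (Vfam A θ i * (gfac A θ i * Wfam A θ i))) := by
            simp only [Matrix.mul_assoc]
    refine h2.congr_deriv (Eq.symm ?_)
    rw [hmat]
    simp only [mulVecCLM_apply, Matrix.smul_mulVec, Matrix.mulVec_mulVec]
    exact (Matrix.smul_mulVec _ _ _).symm
  exact hline1.unique hline2

end Calculus

/-- **Eq. (8) of the paper** in trace form: the QFIM of the postselected family
`ψ^{ps} = Kψ/√p` satisfies
`𝓘_{ij}(θ|ψ^{ps}) = 4 Re[Tr(F Ã_j ρ_θ Ã_i)/p − Tr(F ρ_θ Ã_i) Tr(F Ã_j ρ_θ)/p²]`. -/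
theorem psqfim_trace_formula
    (M D : ℕ) (A : Fin M → Matrix (Fin D) (Fin D) ℂ)
    (hA : ∀ m, (A m)ᴴ = A m)
    (ψ₀ : Fin D → ℂ) (hψ₀ : dotc ψ₀ ψ₀ = 1)
    (ψ : (Fin M → ℝ) → (Fin D → ℂ))
    (hψ : ∀ θ, ψ θ = (Ufam A θ).mulVec ψ₀)
    (ρ : (Fin M → ℝ) → Matrix (Fin D) (Fin D) ℂ)
    (hρ : ∀ θ, ρ θ = vecMulVec (ψ θ) (star (ψ θ)))
    (K : Matrix (Fin D) (Fin D) ℂ) (F : Matrix (Fin D) (Fin D) ℂ)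
    (hF : F = Kᴴ * K)
    (p : (Fin M → ℝ) → ℝ)
    (hp : ∀ θ, p θ = ((F * ρ θ).trace).re)
    (θ : Fin M → ℝ)
    (hppos : ∀ᶠ θ' in nhds θ, 0 < p θ')
    (ψps : (Fin M → ℝ) → (Fin D → ℂ))
    (hψps : ∀ θ', ψps θ' = (Real.sqrt (p θ'))⁻¹ • K.mulVec (ψ θ')) :
    ∀ i j, qfim ψps θ i j =
      4 * ((F * Atil A θ j * ρ θ * Atil A θ i).trace / (p θ : ℂ) -
            (F * ρ θ * Atil A θ i).trace * (F * Atil A θ j * ρ θ).trace /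
              (p θ : ℂ) ^ 2).re := by
  intro i j
  have hθpos : 0 < p θ := hppos.self_of_nhds
  -- abbreviations
  set a : Fin D → ℂ := ψ θ with ha
  set Bi : Matrix (Fin D) (Fin D) ℂ := Atil A θ i with hBidef
  set Bj : Matrix (Fin D) (Fin D) ℂ := Atil A θ j with hBjdef
  have hBi : Biᴴ = Bi := Atil_herm A hA θ i
  have hBj : Bjᴴ = Bj := Atil_herm A hA θ j
  set v : Fin D → ℂ := K.mulVec a with hv
  set ui : Fin D → ℂ := K.mulVec (Bi.mulVec a) with hui
  set uj : Fin D → ℂ := K.mulVec (Bj.mulVec a) with huj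
  set ψf : (Fin M → ℝ) → (Fin D → ℂ) := fun θ' => (Ufam A θ').mulVec ψ₀ with hψf
  have hψfun : ψ = ψf := funext hψ
  set vf : (Fin M → ℝ) → (Fin D → ℂ) := fun θ' => K.mulVec (ψf θ') with hvf
  set cf : (Fin M → ℝ) → ℝ := fun θ' => (Real.sqrt (p θ'))⁻¹ with hcf
  set c : ℝ := cf θ with hc
  -- p in terms of vf
  have hpeq : ∀ θ', p θ' = (dotc (vf θ') (vf θ')).re := by
    intro θ'
    rw [hp θ', hρ θ', trace_mul_vecMulVec F (ψ θ')]
    have h2 : dotc (K.mulVec (ψ θ')) (K.mulVec (ψ θ')) = dotc (ψ θ') (F.mulVec (ψ θ')) := by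
      rw [dotc_mulVec_left, Matrix.mulVec_mulVec, ← hF]
    rw [← h2, hψfun]
  -- differentiability of ψf, vf, p, cf
  have hψd : DifferentiableAt ℝ ψf θ := diffAt_psi A ψ₀ θ
  have hvd : DifferentiableAt ℝ vf θ := ((KmulCLM K).differentiableAt).comp θ hψd
  have hpd : DifferentiableAt ℝ p θ := by
    have hpfun : p = fun θ' => Complex.reCLM (∑ d, starRingEnd ℂ (vf θ' d) * vf θ' d) := by
      funext θ'
      rw [hpeq θ']
      rfl
    rw [hpfun]
    apply (Complex.reCLM.differentiableAt).comp θ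
    apply DifferentiableAt.fun_sum
    intro d _
    have hcoord : DifferentiableAt ℝ (fun θ' => vf θ' d) θ :=
      ((ContinuousLinearMap.proj (R := ℝ) (φ := fun _ : Fin D => ℂ) d).differentiableAt).comp θ hvd
    exact ((Complex.conjCLE.differentiableAt).comp θ hcoord).mul hcoord
  have hsq : Real.sqrt (p θ) ≠ 0 := (Real.sqrt_pos.mpr hθpos).ne'
  have hcd : DifferentiableAt ℝ cf θ := (hpd.sqrt hθpos.ne').inv hsq
  -- ψps as smul
  have hψpsfun : ψps = fun θ' => cf θ' • vf θ' := by
    funext θ'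
    rw [hψps θ', hψfun]
  -- the partial derivative of ψf
  have hfd : ∀ k : Fin M, fderiv ℝ ψf θ (Pi.single k 1)
      = Complex.I • (Atil A θ k).mulVec a := by
    intro k
    rw [hψf, fderiv_psi A hA ψ₀ θ k]
    rw [ha, hψfun, hψf]
  have hvfd : fderiv ℝ vf θ = (KmulCLM K).comp (fderiv ℝ ψf θ) :=
    ((KmulCLM K).hasFDerivAt.comp θ hψd.hasFDerivAt).fderiv
  -- pder of ψps
  have hpder : ∀ k : Fin M, ∀ u : Fin D → ℂ, u = K.mulVec ((Atil A θ k).mulVec a) →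
      pder k ψps θ = (fderiv ℝ cf θ (Pi.single k 1)) • v + c • (Complex.I • u) := by
    intro k u hu
    rw [pder, hψpsfun, fderiv_fun_smul hcd hvd]
    rw [ContinuousLinearMap.add_apply, ContinuousLinearMap.smul_apply,
      ContinuousLinearMap.smulRight_apply]
    rw [hvfd, ContinuousLinearMap.comp_apply, hfd k, add_comm]
    have h1 : vf θ = v := by rw [hv, ha, hψfun]
    have h2 : (KmulCLM K) (Complex.I • (Atil A θ k).mulVec a) = Complex.I • u := by
      rw [KmulCLM_apply, Matrix.mulVec_smul, hu]
    rw [h1, h2]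
  set ri : ℝ := fderiv ℝ cf θ (Pi.single i 1) with hri
  set rj : ℝ := fderiv ℝ cf θ (Pi.single j 1) with hrj
  have hdi : pder i ψps θ = ri • v + c • (Complex.I • ui) := hpder i ui hui
  have hdj : pder j ψps θ = rj • v + c • (Complex.I • uj) := hpder j uj huj
  have hφθ : ψps θ = c • v := by rw [hψps θ]
  -- the inner product with itself
  have hvv : dotc v v = ((p θ : ℝ) : ℂ) := by
    have h1 : p θ = (dotc v v).re := by
      rw [hpeq θ, hv, ha, hψfun]
    rw [dotc_self_real] at h1 ⊢
    rw [h1]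
    simp
  -- trace identities
  have htr1 : (F * Bj * ρ θ * Bi).trace = dotc ui uj := by
    rw [hρ θ, Matrix.trace_mul_comm,
      show Bi * (F * Bj * vecMulVec a (star a)) = (Bi * F * Bj) * vecMulVec a (star a) by
        simp [Matrix.mul_assoc],
      trace_mul_vecMulVec, hui, huj, dotc_mulVec_left K, dotc_mulVec_left Bi, hBi, hF,
      ← Matrix.mul_assoc Bi Kᴴ K]
    simp only [Matrix.mulVec_mulVec, Matrix.mul_assoc]
  have htr2 : (F * Bj * ρ θ).trace = dotc v uj := by
    rw [hρ θ, trace_mul_vecMulVec, hv, huj, dotc_mulVec_left K, hF]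
    simp only [Matrix.mulVec_mulVec, Matrix.mul_assoc]
    rfl
  have htr3 : (F * ρ θ * Bi).trace = dotc ui v := by
    rw [hρ θ, Matrix.trace_mul_comm,
      show Bi * (F * vecMulVec a (star a)) = (Bi * F) * vecMulVec a (star a) by
        simp [Matrix.mul_assoc],
      trace_mul_vecMulVec, hui, hv, dotc_mulVec_left K, dotc_mulVec_left Bi, hBi, hF,
      ← Matrix.mul_assoc Bi Kᴴ K]
    simp only [Matrix.mulVec_mulVec, Matrix.mul_assoc]
  -- scalar facts
  have hq0 : ((p θ : ℝ) : ℂ) ≠ 0 := by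
    simpa using hθpos.ne'
  have hc2 : ((c : ℝ) : ℂ) ^ 2 * ((p θ : ℝ) : ℂ) = 1 := by
    have hreal : (c : ℝ) ^ 2 * p θ = 1 := by
      rw [hc, hcf]
      have hs : Real.sqrt (p θ) ^ 2 = p θ := Real.sq_sqrt hθpos.le
      rw [← hs]
      field_simp
    exact_mod_cast hreal
  -- the key complex identity
  have hkey : dotc (pder i ψps θ) (pder j ψps θ) -
      dotc (pder i ψps θ) (ψps θ) * dotc (ψps θ) (pder j ψps θ)
      = (F * Bj * ρ θ * Bi).trace / ((p θ : ℝ) : ℂ) -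
        (F * ρ θ * Bi).trace * (F * Bj * ρ θ).trace / ((p θ : ℝ) : ℂ) ^ 2 := by
    rw [hdi, hdj, hφθ, htr1, htr2, htr3]
    simp only [dotc_add_left, dotc_add_right, dotc_rsmul_left, dotc_rsmul_right,
      dotc_smul_left, dotc_smul_right, Complex.conj_I, hvv]
    field_simp
    ring_nf
    simp only [Complex.I_sq]
    linear_combination (((p θ : ℝ) : ℂ) ^ 2 * (c : ℂ) * Complex.I *
        ((rj : ℂ) * dotc ui v - (ri : ℂ) * dotc v uj) -
      ((p θ : ℝ) : ℂ) ^ 3 * (ri : ℂ) * (rj : ℂ) + ((p θ : ℝ) : ℂ) * dotc ui uj -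
      ((c : ℂ) ^ 2 * ((p θ : ℝ) : ℂ) + 1) * dotc ui v * dotc v uj) * hc2
  rw [qfim, hkey]

end
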